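/- Let ν > 0 and let α, μ, γ be real constants. Define u : ℝ × ℝ → ℝ by u(x,t) = (α + μ + (μ − α)·exp(η))/(1 + exp(η)) where η = α(x − μt − γ)/ν. Then u satisfies the Burgers' equation u_t + u·u_x − ν·u_xx = 0 at every point (x,t) ∈ ℝ × ℝ. -/

import Mathlib

open Real

lemma burgers_aux_pos (s : ℝ) : (1 : ℝ) + Real.exp s ≠ 0 := by
  positivity

lemma burgers_f_deriv (α μ : ℝ) (s : ℝ) :
    HasDerivAt (fun s => (α + μ + (μ - α) * Real.exp s) / (1 + Real.exp s))
      (-2 * α * Real.exp s / (1 + Real.exp s) ^ 2) s := by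
  have hnum : HasDerivAt (fun s => α + μ + (μ - α) * Real.exp s)
      ((μ - α) * Real.exp s) s := by
    simpa using ((Real.hasDerivAt_exp s).const_mul (μ - α)).const_add (α + μ)
  have hden : HasDerivAt (fun s => 1 + Real.exp s) (Real.exp s) s := by
    simpa using (Real.hasDerivAt_exp s).const_add 1
  have := hnum.fun_div hden (burgers_aux_pos s)
  convert this using 1
  any_goals rfl
  have h := burgers_aux_pos s
  field_simp
  ring

lemma burgers_f'_deriv (α μ : ℝ) (s : ℝ) :
    HasDerivAt (fun s => -2 * α * Real.exp s / (1 + Real.exp s) ^ 2)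
      (-2 * α * Real.exp s * (1 - Real.exp s) / (1 + Real.exp s) ^ 3) s := by
  have hnum : HasDerivAt (fun s => -2 * α * Real.exp s) (-2 * α * Real.exp s) s := by
    simpa using (Real.hasDerivAt_exp s).const_mul (-2 * α)
  have hden : HasDerivAt (fun s => (1 + Real.exp s) ^ 2)
      (2 * (1 + Real.exp s) * Real.exp s) s := by
    have h1 : HasDerivAt (fun s => 1 + Real.exp s) (Real.exp s) s := by
      simpa using (Real.hasDerivAt_exp s).const_add 1
    simpa using h1.fun_pow 2
  have hd2 : ((1 : ℝ) + Real.exp s) ^ 2 ≠ 0 := pow_ne_zero _ (burgers_aux_pos s)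
  have := hnum.fun_div hden hd2
  convert this using 1
  any_goals rfl
  have h := burgers_aux_pos s
  field_simp
  ring

/-- The travelling-wave solution of Burgers' equation
`u(x,t) = (α + μ + (μ − α)·exp(η))/(1 + exp(η))` with `η = α(x − μt − γ)/ν`
satisfies `u_t + u·u_x − ν·u_xx = 0` at every point of `ℝ × ℝ`. -/
theorem burgers_travelling_wave_solution
    (ν α μ γ : ℝ) (hν : 0 < ν) (u : ℝ → ℝ → ℝ)
    (hu : ∀ x t : ℝ,
      u x t = (α + μ + (μ - α) * Real.exp (α * (x - μ * t - γ) / ν)) /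
              (1 + Real.exp (α * (x - μ * t - γ) / ν))) :
    ∀ x t : ℝ,
      deriv (fun τ => u x τ) t
        + u x t * deriv (fun y => u y t) x
        - ν * deriv (deriv (fun y => u y t)) x = 0 := by
  intro x t
  have hν' : ν ≠ 0 := ne_of_gt hν
  -- spatial derivative of u at an arbitrary point y (for fixed t)
  have hsp : ∀ y : ℝ, HasDerivAt (fun y => u y t)
      (-2 * α * Real.exp (α * (y - μ * t - γ) / ν) /
        (1 + Real.exp (α * (y - μ * t - γ) / ν)) ^ 2 * (α / ν)) y := by
    intro y
    have hlin : HasDerivAt (fun y : ℝ => α * (y - μ * t - γ) / ν) (α / ν) y := by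
      have : HasDerivAt (fun y : ℝ => α * (y - μ * t - γ) / ν) (α * 1 / ν) y :=
        ((((hasDerivAt_id y).sub_const (μ * t)).sub_const γ).const_mul α).div_const ν
      simpa using this
    have := (burgers_f_deriv α μ (α * (y - μ * t - γ) / ν)).comp y hlin
    have heq : (fun y : ℝ => u y t) =
        ((fun s => (α + μ + (μ - α) * Real.exp s) / (1 + Real.exp s)) ∘
          fun y : ℝ => α * (y - μ * t - γ) / ν) := by
    -- pointwise equality
      funext y'
      simp [hu y' t, Function.comp]
    rw [heq]
    exact this
  -- explicit formula for the spatial derivative function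
  have hderiv_eq : deriv (fun y => u y t) = fun y =>
      -2 * α * Real.exp (α * (y - μ * t - γ) / ν) /
        (1 + Real.exp (α * (y - μ * t - γ) / ν)) ^ 2 * (α / ν) := by
    funext y
    exact (hsp y).deriv
  -- time derivative of u at t
  have htime : HasDerivAt (fun τ => u x τ)
      (-2 * α * Real.exp (α * (x - μ * t - γ) / ν) /
        (1 + Real.exp (α * (x - μ * t - γ) / ν)) ^ 2 * (α * -μ / ν)) t := by
    have hlin : HasDerivAt (fun τ : ℝ => α * (x - μ * τ - γ) / ν) (α * -μ / ν) t := by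
      have h1 : HasDerivAt (fun τ : ℝ => x - μ * τ - γ) (-μ) t := by
        have := ((hasDerivAt_id t).const_mul μ).const_sub x
        simpa using this.sub_const γ
      have := (h1.const_mul α).div_const ν
      simpa using this
    have := (burgers_f_deriv α μ (α * (x - μ * t - γ) / ν)).comp t hlin
    have heq : (fun τ : ℝ => u x τ) =
        ((fun s => (α + μ + (μ - α) * Real.exp s) / (1 + Real.exp s)) ∘
          fun τ : ℝ => α * (x - μ * τ - γ) / ν) := by
      funext τ'
      simp [hu x τ', Function.comp]
    rw [heq]
    exact this
  -- second spatial derivative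
  have hsecond : HasDerivAt (deriv (fun y => u y t))
      (-2 * α * Real.exp (α * (x - μ * t - γ) / ν) *
        (1 - Real.exp (α * (x - μ * t - γ) / ν)) /
        (1 + Real.exp (α * (x - μ * t - γ) / ν)) ^ 3 * (α / ν) * (α / ν)) x := by
    rw [hderiv_eq]
    have hlin : HasDerivAt (fun y : ℝ => α * (y - μ * t - γ) / ν) (α / ν) x := by
      have : HasDerivAt (fun y : ℝ => α * (y - μ * t - γ) / ν) (α * 1 / ν) x :=
        ((((hasDerivAt_id x).sub_const (μ * t)).sub_const γ).const_mul α).div_const ν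
      simpa using this
    have hcomp := (burgers_f'_deriv α μ (α * (x - μ * t - γ) / ν)).comp x hlin
    have := hcomp.mul_const (α / ν)
    convert this using 1
    all_goals rfl
  rw [htime.deriv, hsecond.deriv, hderiv_eq, hu x t]
  set e := Real.exp (α * (x - μ * t - γ) / ν) with he
  have hepos : (0:ℝ) < e := Real.exp_pos _
  have hne : (1:ℝ) + e ≠ 0 := by positivity
  field_simp
  rw [← he]
  ring
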